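/- Let m ≥ 2 and let A be a real m×m matrix with a_{ij} ≥ 0 for all i ≠ j, zero row sums, and irreducible (for every pair i ≠ j there is a chain i = i₀, …, i_k = j with a_{i_l i_{l+1}} ≠ 0). Let ξ ∈ ℝᵐ with ξ_i > 0 for all i and ξᵀA = 0, set Ξ = diag(ξ₁,…,ξ_m), let ε > 0, and let Ã be the pinned matrix (ã_{11} = a_{11} − ε, ã_{ij} = a_{ij} otherwise). Then the symmetric part {ΞÃ}^s = (1/2)(ΞÃ + ÃᵀΞ) is negative definite. -/
import Mathlib


open Matrix BigOperators

lemma chain_ne_aux {m : ℕ} {A : Matrix (Fin m) (Fin m) ℝ} {v : Fin m → ℝ} {x y : Fin m}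
    (h : Relation.TransGen (fun p q => A p q ≠ 0) x y) (hne : v x ≠ v y) :
    ∃ p q, A p q ≠ 0 ∧ v p ≠ v q := by
  by_contra hc
  push_neg at hc
  have aux : ∀ {a c : Fin m}, Relation.TransGen (fun p q => A p q ≠ 0) a c → v a = v c := by
    intro a c h'
    induction h' with
    | single h1 => exact hc _ _ h1
    | tail _ h₂ ih => exact ih.trans (hc _ _ h₂)
  exact hne (aux h)

lemma key_identity_aux {m : ℕ} (b : Matrix (Fin m) (Fin m) ℝ) (v : Fin m → ℝ)
    (hrow : ∀ i, ∑ j, b i j = 0) (hcol : ∀ j, ∑ i, b i j = 0) :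
    ∑ i, ∑ j, b i j * v i * v j = -(1/2) * ∑ i, ∑ j, b i j * (v i - v j)^2 := by
  have h1 : ∑ i, ∑ j, b i j * v i ^ 2 = 0 := by
    refine Finset.sum_eq_zero fun i _ => ?_
    rw [← Finset.sum_mul, hrow, zero_mul]
  have h2 : ∑ i, ∑ j, b i j * v j ^ 2 = 0 := by
    rw [Finset.sum_comm]
    refine Finset.sum_eq_zero fun j _ => ?_
    rw [← Finset.sum_mul, hcol, zero_mul]
  have ept : ∀ i j : Fin m, b i j * (v i - v j)^2
      = (b i j * v i ^ 2 - 2 * (b i j * v i * v j)) + b i j * v j ^ 2 := fun i j => by ring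
  have expand : ∑ i, ∑ j, b i j * (v i - v j)^2
      = (∑ i, ∑ j, b i j * v i ^ 2 - 2 * ∑ i, ∑ j, b i j * v i * v j)
        + ∑ i, ∑ j, b i j * v j ^ 2 := by
    simp_rw [ept, Finset.sum_add_distrib, Finset.sum_sub_distrib, ← Finset.mul_sum]
  rw [h1, h2] at expand
  linarith

/-- For an irreducible zero-row-sum matrix `A` with nonnegative off-diagonal
entries and positive left null vector `ξ`, the symmetric part of `ΞÃ` (where `Ã`
is the pinned matrix) is negative definite. -/
theorem stmt_12 (m : ℕ) (hm : 2 ≤ m) (A : Matrix (Fin m) (Fin m) ℝ)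
    (hoff : ∀ i j : Fin m, i ≠ j → 0 ≤ A i j)
    (hrow : ∀ i : Fin m, ∑ j, A i j = 0)
    (hirr : ∀ i j : Fin m, i ≠ j → Relation.TransGen (fun p q => A p q ≠ 0) i j)
    (ξ : Fin m → ℝ) (hξ : ∀ i, 0 < ξ i)
    (hleft : ξ ᵥ* A = 0)
    (ε : ℝ) (hε : 0 < ε)
    (Atil : Matrix (Fin m) (Fin m) ℝ)
    (hAtil : ∀ i j : Fin m, Atil i j =
      if i = (⟨0, by omega⟩ : Fin m) ∧ j = (⟨0, by omega⟩ : Fin m) then A i j - ε else A i j)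
    (v : Fin m → ℝ) (hv : v ≠ 0) :
    v ⬝ᵥ ((1 / 2 : ℝ) • (Matrix.diagonal ξ * Atil + Atilᵀ * Matrix.diagonal ξ)) *ᵥ v < 0 := by
  set z : Fin m := (⟨0, by omega⟩ : Fin m) with hz
  set B : Matrix (Fin m) (Fin m) ℝ := fun i j => ξ i * A i j with hBdef
  -- Step 1: the quadratic form equals ∑∑ ξ i * Atil i j * v i * v j
  have step1 : v ⬝ᵥ ((1 / 2 : ℝ) • (Matrix.diagonal ξ * Atil + Atilᵀ * Matrix.diagonal ξ)) *ᵥ v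
      = ∑ i, ∑ j, ξ i * Atil i j * v i * v j := by
    simp only [dotProduct, Matrix.mulVec, Matrix.smul_apply, Matrix.add_apply,
      Matrix.diagonal_mul, Matrix.mul_diagonal, Matrix.transpose_apply, smul_eq_mul,
      Finset.mul_sum]
    have ept : ∀ x y : Fin m, v x * (1/2 * (ξ x * Atil x y + Atil y x * ξ y) * v y)
        = 1/2 * (ξ x * Atil x y * v x * v y) + 1/2 * (ξ y * Atil y x * v y * v x) :=
      fun x y => by ring
    simp_rw [ept, Finset.sum_add_distrib]
    have hswap : ∑ x : Fin m, ∑ y : Fin m, 1/2 * (ξ y * Atil y x * v y * v x)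
        = ∑ x : Fin m, ∑ y : Fin m, 1/2 * (ξ x * Atil x y * v x * v y) := Finset.sum_comm
    rw [hswap]
    simp_rw [← Finset.mul_sum]
    ring
  -- Step 2: split off the pinning term
  have step2 : ∑ i, ∑ j, ξ i * Atil i j * v i * v j
      = (∑ i, ∑ j, B i j * v i * v j) - ε * ξ z * v z * v z := by
    have hterm : ∀ i j : Fin m, ξ i * Atil i j * v i * v j
        = B i j * v i * v j - (if i = z ∧ j = z then ε * ξ z * v z * v z else 0) := by
      intro i j
      rw [hAtil]
      by_cases h : i = z ∧ j = z
      · obtain ⟨hi, hj⟩ := h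
        subst hi; subst hj
        simp only [and_self, if_true, hBdef]
        ring
      · simp only [h, if_false, hBdef]
        ring
    simp_rw [hterm, Finset.sum_sub_distrib]
    congr 1
    rw [Finset.sum_eq_single z]
    · rw [Finset.sum_eq_single z]
      · simp
      · intro b _ hb; simp [hb]
      · intro h; exact absurd (Finset.mem_univ z) h
    · intro b _ hb
      refine Finset.sum_eq_zero fun j _ => ?_
      simp [hb]
    · intro h; exact absurd (Finset.mem_univ z) h
  -- row and column sums of B vanish
  have hBrow : ∀ i, ∑ j, B i j = 0 := by
    intro i
    simp only [hBdef, ← Finset.mul_sum, hrow i, mul_zero]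
  have hBcol : ∀ j, ∑ i, B i j = 0 := by
    intro j
    have := congrFun hleft j
    simpa [Matrix.vecMul, dotProduct, hBdef] using this
  have step3 := key_identity_aux B v hBrow hBcol
  -- nonnegativity of the Dirichlet sum
  have hterm_nonneg : ∀ i j : Fin m, 0 ≤ B i j * (v i - v j)^2 := by
    intro i j
    by_cases h : i = j
    · subst h; simp
    · exact mul_nonneg (mul_nonneg (hξ i).le (hoff i j h)) (sq_nonneg _)
  have hS_nonneg : 0 ≤ ∑ i, ∑ j, B i j * (v i - v j)^2 :=
    Finset.sum_nonneg fun i _ => Finset.sum_nonneg fun j _ => hterm_nonneg i j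
  rw [step1, step2, step3]
  by_cases hvz : v z = 0
  · -- find k with v k ≠ 0, then a chain edge where v changes
    obtain ⟨k, hk⟩ := Function.ne_iff.mp hv
    have hkz : k ≠ z := fun h => hk (h ▸ hvz)
    have hne : v z ≠ v k := by rw [hvz]; exact fun h => hk h.symm
    obtain ⟨p, q, hpq, hvpq⟩ := chain_ne_aux (hirr z k (Ne.symm hkz)) hne
    have hpq' : p ≠ q := fun h => hvpq (h ▸ rfl)
    have hpos : 0 < B p q * (v p - v q)^2 := by
      have hApq : 0 < A p q := lt_of_le_of_ne (hoff p q hpq') (Ne.symm hpq)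
      have hd : v p - v q ≠ 0 := sub_ne_zero.mpr hvpq
      have : 0 < (v p - v q)^2 := by positivity
      exact mul_pos (mul_pos (hξ p) hApq) this
    have hS_pos : 0 < ∑ i, ∑ j, B i j * (v i - v j)^2 := by
      refine Finset.sum_pos' (fun i _ => Finset.sum_nonneg fun j _ => hterm_nonneg i j) ?_
      exact ⟨p, Finset.mem_univ p,
        Finset.sum_pos' (fun j _ => hterm_nonneg p j) ⟨q, Finset.mem_univ q, hpos⟩⟩
    rw [hvz]
    nlinarith
  · have h1 : 0 < ε * ξ z * v z * v z := by
      have h2 := mul_pos (mul_pos hε (hξ z)) (mul_self_pos.mpr hvz)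
      rw [← mul_assoc] at h2
      exact h2
    nlinarith
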